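/- Let a > 0 and 0 ≤ m < 2, and set Ω(a,m) = { b ≥ 0 : sup_{t∈ℝ} |cos(ta) − cos(tb)| ≤ m }. Then Ω(a,m) is finite, and every b ∈ Ω(a,m) has the form b = pa/q where p and q are odd positive integers, gcd(p,q) = 1, and p ≤ π/arccos(m−1), q ≤ π/arccos(m−1). -/

import Mathlib

open Real


lemma aux_bound (m u v : ℝ) (hu : 0 < u) (hm0 : 0 ≤ m) (hm2 : m < 2)
    (p q : ℕ) (hq : 0 < q) (hqodd : Odd q) (hco : Nat.Coprime p q)
    (hv : v = p * u / q) (H : ∀ t : ℝ, |Real.cos (t * u) - Real.cos (t * v)| ≤ m) :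
    (q : ℝ) ≤ Real.pi / Real.arccos (m - 1) := by
  set c := Real.arccos (m - 1) with hc_def
  have hc : 0 < c := Real.arccos_pos.2 (by linarith)
  have hcpi : c ≤ π := Real.arccos_le_pi _
  have hcos_c : Real.cos c = m - 1 := Real.cos_arccos (by linarith) (by linarith)
  obtain ⟨l, hl⟩ := hqodd
  have hq0 : (q : ℝ) ≠ 0 := by positivity
  have hu0 : u ≠ 0 := hu.ne'
  have hql : (q : ℝ) = 2 * l + 1 := by exact_mod_cast congrArg (Nat.cast : ℕ → ℝ) hl
  -- the main inequality : cos (π / q) ≤ m - 1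
  have hkey : Real.cos (π / q) ≤ m - 1 := by
    haveI : NeZero q := ⟨hq.ne'⟩
    set k : ℕ := ((l : ZMod q) * ((p : ZMod q))⁻¹).val with hk_def
    have hmod : ((k * p : ℕ) : ZMod q) = ((l : ℕ) : ZMod q) := by
      push_cast
      rw [hk_def, ZMod.natCast_val, ZMod.cast_id, mul_assoc,
        mul_comm ((p : ZMod q))⁻¹ _, ZMod.coe_mul_inv_eq_one p hco, mul_one]
    have hmod' : (k * p) % q = l % q := (ZMod.natCast_eq_natCast_iff' _ _ _).mp hmod
    have hdvd : (q : ℤ) ∣ (l : ℤ) - (k * p : ℕ) :=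
      (Nat.modEq_iff_dvd (n := q)).mp hmod'
    obtain ⟨j, hj⟩ := hdvd
    have hkp : ((k : ℝ) * p) = l - q * j := by
      have := congrArg (fun z : ℤ => (z : ℝ)) hj
      push_cast at this ⊢
      linarith
    have ht := H (2 * π * k / u)
    have h1 : (2 * π * k / u) * u = k * (2 * π) := by field_simp
    have h3 : π - π / (q : ℝ) = 2 * π * l / q := by rw [hql]; field_simp; ring
    have h2 : (2 * π * k / u) * v = (π - π / q) + ((-j : ℤ) : ℝ) * (2 * π) := by
      have h4 : (2 * π * k / u) * v = 2 * π * ((k : ℝ) * p) / q := by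
        rw [hv]; field_simp
      rw [h4, hkp, h3]
      push_cast
      field_simp
      ring
    rw [h1, h2, Real.cos_nat_mul_two_pi, Real.cos_add_int_mul_two_pi, Real.cos_pi_sub] at ht
    have hb1 : -1 ≤ Real.cos (π / q) := Real.neg_one_le_cos _
    rw [abs_le] at ht
    linarith [ht.2]
  -- convert to the bound on q
  have hmem1 : π / q ∈ Set.Icc (0 : ℝ) π := by
    constructor
    · positivity
    · rw [div_le_iff₀ (by positivity)]
      nlinarith [Real.pi_pos, hql, (by positivity : (0:ℝ) ≤ (l:ℝ))]
  have hcq : c ≤ π / q := by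
    by_contra hlt
    push_neg at hlt
    have := Real.strictAntiOn_cos hmem1 ⟨hc.le, hcpi⟩ hlt
    rw [hcos_c] at this
    linarith
  rw [le_div_iff₀ hc]
  have h4 : (q : ℝ) * c ≤ (q : ℝ) * (π / q) := mul_le_mul_of_nonneg_left hcq (by positivity)
  have h5 : (q : ℝ) * (π / q) = π := by field_simp
  linarith

lemma aux_rat (a b m : ℝ) (ha : 0 < a) (hm2 : m < 2)
    (H : ∀ t : ℝ, |Real.cos (t * a) - Real.cos (t * b)| ≤ m) :
    ∃ r : ℚ, (r : ℝ) = b / a := by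
  have ha0 : a ≠ 0 := ha.ne'
  set S : AddSubgroup ℝ :=
    { carrier := {x | ∃ n k : ℤ, x = n + k * (b / a)}
      zero_mem' := ⟨0, 0, by simp⟩
      add_mem' := by
        rintro x y ⟨n1, k1, rfl⟩ ⟨n2, k2, rfl⟩
        exact ⟨n1 + n2, k1 + k2, by push_cast; ring⟩
      neg_mem' := by
        rintro x ⟨n, k, rfl⟩
        exact ⟨-n, -k, by push_cast; ring⟩ } with hS_def
  rcases S.dense_or_cyclic with hd | ⟨g, hg⟩
  · exfalso
    have hU : IsOpen {x : ℝ | Real.cos (2 * π * x) < 1 - m} :=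
      isOpen_lt (Real.continuous_cos.comp (continuous_const.mul continuous_id)) continuous_const
    have hne : Set.Nonempty {x : ℝ | Real.cos (2 * π * x) < 1 - m} := by
      refine ⟨1 / 2, ?_⟩
      have : 2 * π * (1 / 2) = π := by ring
      simp only [Set.mem_setOf_eq, this, Real.cos_pi]
      linarith
    obtain ⟨x, hxS, hxU⟩ := hd.exists_mem_open hU hne
    obtain ⟨n, k, rfl⟩ := hxS
    have ht := H (2 * π * k / a)
    have h1 : (2 * π * k / a) * a = (k : ℤ) * (2 * π) := by push_cast; field_simp
    have h2 : (2 * π * k / a) * b = 2 * π * ((n : ℝ) + k * (b / a)) - (n : ℤ) * (2 * π) := by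
      push_cast; field_simp; ring
    rw [h1, h2, Real.cos_int_mul_two_pi, Real.cos_sub_int_mul_two_pi, abs_le] at ht
    simp only [Set.mem_setOf_eq] at hxU
    linarith [ht.1, ht.2, hxU]
  · have h1S : (1 : ℝ) ∈ S := ⟨1, 0, by push_cast; ring⟩
    have hθS : b / a ∈ S := ⟨0, 1, by push_cast; ring⟩
    rw [hg, AddSubgroup.mem_closure_singleton] at h1S hθS
    obtain ⟨n, hn⟩ := h1S
    obtain ⟨k, hk⟩ := hθS
    rw [zsmul_eq_mul] at hn hk
    refine ⟨(k : ℚ) / (n : ℚ), ?_⟩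
    have hn0 : (n : ℝ) ≠ 0 := by
      rintro h
      rw [h, zero_mul] at hn
      norm_num at hn
    have hn0' : (n : ℚ) ≠ 0 := Int.cast_ne_zero.mpr (Int.cast_ne_zero.mp hn0)
    push_cast
    rw [← hk, div_eq_iff hn0]
    linear_combination (-(k : ℝ)) * hn

theorem stmt_13 (a m : ℝ) (ha : 0 < a) (hm0 : 0 ≤ m) (hm2 : m < 2) :
    Set.Finite {b : ℝ | 0 ≤ b ∧ ∀ t : ℝ, |Real.cos (t * a) - Real.cos (t * b)| ≤ m} ∧
    ∀ b ∈ {b : ℝ | 0 ≤ b ∧ ∀ t : ℝ, |Real.cos (t * a) - Real.cos (t * b)| ≤ m},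
      ∃ p q : ℕ, Odd p ∧ Odd q ∧ Nat.Coprime p q ∧
        b = (p : ℝ) * a / (q : ℝ) ∧
        1 ≤ p ∧ (p : ℝ) ≤ Real.pi / Real.arccos (m - 1) ∧
        1 ≤ q ∧ (q : ℝ) ≤ Real.pi / Real.arccos (m - 1) := by
  have ha0 : a ≠ 0 := ha.ne'
  have key : ∀ b ∈ {b : ℝ | 0 ≤ b ∧ ∀ t : ℝ, |Real.cos (t * a) - Real.cos (t * b)| ≤ m},
      ∃ p q : ℕ, Odd p ∧ Odd q ∧ Nat.Coprime p q ∧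
        b = (p : ℝ) * a / (q : ℝ) ∧
        1 ≤ p ∧ (p : ℝ) ≤ Real.pi / Real.arccos (m - 1) ∧
        1 ≤ q ∧ (q : ℝ) ≤ Real.pi / Real.arccos (m - 1) := by
    rintro b ⟨hb0, H⟩
    have hbpos : 0 < b := by
      rcases hb0.lt_or_eq with h | h
      · exact h
      · exfalso
        have ht := H (π / a)
        rw [← h] at ht
        have h1 : (π / a) * a = π := by field_simp
        have h2 : (π / a) * (0 : ℝ) = 0 := by ring
        rw [h1, h2, Real.cos_pi, Real.cos_zero] at ht
        rw [abs_le] at ht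
        linarith [ht.1]
    have hb0' : b ≠ 0 := hbpos.ne'
    obtain ⟨r, hr⟩ := aux_rat a b m ha hm2 H
    have hrpos : 0 < r := by
      have h : (0 : ℝ) < b / a := div_pos hbpos ha
      rw [← hr] at h
      exact_mod_cast h
    set p : ℕ := r.num.toNat with hp_def
    set q : ℕ := r.den with hq_def
    have hnumpos : 0 < r.num := Rat.num_pos.mpr hrpos
    have hnum : ((p : ℤ) : ℝ) = (r.num : ℝ) := by
      rw [hp_def]; exact_mod_cast congrArg (Int.cast : ℤ → ℝ) (Int.toNat_of_nonneg hnumpos.le)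
    have hq : 0 < q := r.pos
    have hq0 : (q : ℝ) ≠ 0 := by positivity
    have hco : Nat.Coprime p q := by
      have h := r.reduced
      have : p = r.num.natAbs := by rw [hp_def]; omega
      rwa [this]
    have hb_eq : b = (p : ℝ) * a / (q : ℝ) := by
      have hcast : (r : ℝ) = (p : ℝ) / (q : ℝ) := by
        rw [Rat.cast_def]
        congr 1
        · exact_mod_cast hnum.symm
      rw [hcast] at hr
      field_simp at hr ⊢
      linarith [hr]
    have hp1 : 0 < p := by
      rcases Nat.eq_zero_or_pos p with h | h
      · exfalso
        rw [h] at hb_eq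
        norm_num at hb_eq
        exact hb0' hb_eq
      · exact h
    have hparity : Odd p ∧ Odd q := by
      have ht := H ((q : ℝ) * π / a)
      have h1 : ((q : ℝ) * π / a) * a = 0 + (q : ℕ) * π := by field_simp; ring
      have h2 : ((q : ℝ) * π / a) * b = 0 + (p : ℕ) * π := by
        rw [hb_eq]; field_simp; ring
      rw [h1, h2, Real.cos_add_nat_mul_pi, Real.cos_add_nat_mul_pi, Real.cos_zero, mul_one,
        mul_one, abs_le] at ht
      rcases Nat.even_or_odd p with hpe | hpo <;> rcases Nat.even_or_odd q with hqe | hqo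
      · exfalso
        have hd : (2 : ℕ) ∣ Nat.gcd p q := Nat.dvd_gcd hpe.two_dvd hqe.two_dvd
        rw [hco.gcd_eq_one] at hd
        norm_num at hd
      · exfalso
        rw [hqo.neg_one_pow, hpe.neg_one_pow] at ht
        linarith [ht.1]
      · exfalso
        rw [hqe.neg_one_pow, hpo.neg_one_pow] at ht
        linarith [ht.2]
      · exact ⟨hpo, hqo⟩
    have hQ := aux_bound m a b ha hm0 hm2 p q hq hparity.2 hco hb_eq H
    have ha_eq : a = (q : ℝ) * b / (p : ℝ) := by
      rw [hb_eq]
      field_simp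
    have hP := aux_bound m b a hbpos hm0 hm2 q p hp1 hparity.1 hco.symm ha_eq
      (fun t => by rw [abs_sub_comm]; exact H t)
    exact ⟨p, q, hparity.1, hparity.2, hco, hb_eq, hp1, hP, hq, hQ⟩
  refine ⟨?_, key⟩
  set N := ⌈π / Real.arccos (m - 1)⌉₊ with hN
  apply Set.Finite.subset
    (((Set.finite_Iic N).prod (Set.finite_Iic N)).image (fun pq : ℕ × ℕ => (pq.1 : ℝ) * a / pq.2))
  rintro b hb
  obtain ⟨p, q, _, _, _, hbeq, _, hpb, _, hqb⟩ := key b hb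
  refine ⟨(p, q), ⟨?_, ?_⟩, hbeq.symm⟩
  · exact_mod_cast hpb.trans (Nat.le_ceil _)
  · exact_mod_cast hqb.trans (Nat.le_ceil _)
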